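/- Let Q = [-d, r₁/M] × [a₂ - 2r₂, a₂ + 2r₂] ⊂ ℝ² with 0 ≤ d < r₁/M, M > 1, and r₁ ≥ r₂ > 0. Then for any convex body K̃ ⊂ Q and p ∈ (0,1), ∫_{S¹} h_{K̃}^{1-p} dS(K̃,·) ≤ 2^{1-p} (4r₂(r₁/M + d))^{1-p} (2r₁/M + 2d + 8r₂)^p ≤ (C/M^{1-p}) (r₁r₂)^{1-p} (r₁² + r₂²)^{p/2} for a constant C depending only on p. -/

import Mathlib

open MeasureTheory RealInnerProductSpace
open scoped ENNReal NNReal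

/-- The support function of a set `K ⊂ ℝ²`. -/
noncomputable def suppFn (K : Set (EuclideanSpace ℝ (Fin 2)))
    (u : EuclideanSpace ℝ (Fin 2)) : ℝ :=
  sSup ((fun x => ⟪u, x⟫) '' K)

namespace Stmt12Aux

abbrev E := EuclideanSpace ℝ (Fin 2)

lemma cont_eval (i : Fin 2) : Continuous fun x : E => x i :=
  (EuclideanSpace.proj (𝕜 := ℝ) i).continuous

/-- `H¹` of a vertical segment. -/
lemma hmeas_vert_le (c l u' : ℝ) :
    μH[1] {x : E | x 0 = c ∧ x 1 ∈ Set.Icc l u'} ≤ ENNReal.ofReal (u' - l) := by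
  set g : ℝ → E := fun t => (WithLp.equiv 2 (Fin 2 → ℝ)).symm ![c, t] with hgdef
  have hg0 : ∀ t, g t 0 = c := fun t => rfl
  have hg1 : ∀ t, g t 1 = t := fun t => rfl
  have hlip : LipschitzWith 1 g := by
    refine LipschitzWith.of_dist_le_mul fun a b => ?_
    rw [NNReal.coe_one, one_mul, EuclideanSpace.dist_eq, Real.dist_eq]
    have hsum : ∑ i : Fin 2, dist (g a i) (g b i) ^ 2 = (a - b) ^ 2 := by
      rw [Fin.sum_univ_two, hg0, hg0, hg1, hg1, Real.dist_eq, Real.dist_eq]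
      simp [sq_abs]
    rw [hsum, Real.sqrt_sq_eq_abs]
  have hsub : {x : E | x 0 = c ∧ x 1 ∈ Set.Icc l u'} ⊆ g '' Set.Icc l u' := by
    rintro x ⟨h0, h1⟩
    refine ⟨x 1, h1, ?_⟩
    ext i
    fin_cases i
    · simpa [hg0] using h0.symm
    · simp [hg1]
  have himg := hlip.hausdorffMeasure_image_le zero_le_one (Set.Icc l u')
  have himg' : μH[1] (g '' Set.Icc l u') ≤ ENNReal.ofReal (u' - l) := by
    simpa [MeasureTheory.hausdorffMeasure_real, Real.volume_Icc] using himg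
  exact le_trans (measure_mono hsub) himg'

/-- `H¹` of a horizontal segment. -/
lemma hmeas_horiz_le (c l u' : ℝ) :
    μH[1] {x : E | x 1 = c ∧ x 0 ∈ Set.Icc l u'} ≤ ENNReal.ofReal (u' - l) := by
  set g : ℝ → E := fun t => (WithLp.equiv 2 (Fin 2 → ℝ)).symm ![t, c] with hgdef
  have hg0 : ∀ t, g t 0 = t := fun t => rfl
  have hg1 : ∀ t, g t 1 = c := fun t => rfl
  have hlip : LipschitzWith 1 g := by
    refine LipschitzWith.of_dist_le_mul fun a b => ?_
    rw [NNReal.coe_one, one_mul, EuclideanSpace.dist_eq, Real.dist_eq]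
    have hsum : ∑ i : Fin 2, dist (g a i) (g b i) ^ 2 = (a - b) ^ 2 := by
      rw [Fin.sum_univ_two, hg0, hg0, hg1, hg1, Real.dist_eq, Real.dist_eq]
      simp [sq_abs]
    rw [hsum, Real.sqrt_sq_eq_abs]
  have hsub : {x : E | x 1 = c ∧ x 0 ∈ Set.Icc l u'} ⊆ g '' Set.Icc l u' := by
    rintro x ⟨h0, h1⟩
    refine ⟨x 0, h1, ?_⟩
    ext i
    fin_cases i
    · simp [hg0]
    · simpa [hg1] using h0.symm
  have himg := hlip.hausdorffMeasure_image_le zero_le_one (Set.Icc l u')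
  have himg' : μH[1] (g '' Set.Icc l u') ≤ ENNReal.ofReal (u' - l) := by
    simpa [MeasureTheory.hausdorffMeasure_real, Real.volume_Icc] using himg
  exact le_trans (measure_mono hsub) himg'

/-- perimeter bound for the box -/
lemma box_frontier_le (a b c e : ℝ) (hab : a ≤ b) (hce : c ≤ e) :
    μH[1] (frontier {x : E | a ≤ x 0 ∧ x 0 ≤ b ∧ c ≤ x 1 ∧ x 1 ≤ e})
      ≤ ENNReal.ofReal (2*(b-a) + 2*(e-c)) := by
  set Q : Set E := {x | a ≤ x 0 ∧ x 0 ≤ b ∧ c ≤ x 1 ∧ x 1 ≤ e} with hQdef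
  have hQc : IsClosed Q := by
    have h1 : IsClosed {x : E | a ≤ x 0} := isClosed_le continuous_const (cont_eval 0)
    have h2 : IsClosed {x : E | x 0 ≤ b} := isClosed_le (cont_eval 0) continuous_const
    have h3 : IsClosed {x : E | c ≤ x 1} := isClosed_le continuous_const (cont_eval 1)
    have h4 : IsClosed {x : E | x 1 ≤ e} := isClosed_le (cont_eval 1) continuous_const
    have : Q = {x : E | a ≤ x 0} ∩ ({x | x 0 ≤ b} ∩ ({x | c ≤ x 1} ∩ {x | x 1 ≤ e})) := by
      ext x; simp [hQdef, Set.mem_setOf_eq, and_assoc]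
    rw [this]
    exact h1.inter (h2.inter (h3.inter h4))
  have hO : IsOpen {x : E | a < x 0 ∧ x 0 < b ∧ c < x 1 ∧ x 1 < e} := by
    have h1 : IsOpen {x : E | a < x 0} := isOpen_lt continuous_const (cont_eval 0)
    have h2 : IsOpen {x : E | x 0 < b} := isOpen_lt (cont_eval 0) continuous_const
    have h3 : IsOpen {x : E | c < x 1} := isOpen_lt continuous_const (cont_eval 1)
    have h4 : IsOpen {x : E | x 1 < e} := isOpen_lt (cont_eval 1) continuous_const
    have : {x : E | a < x 0 ∧ x 0 < b ∧ c < x 1 ∧ x 1 < e}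
        = {x : E | a < x 0} ∩ ({x | x 0 < b} ∩ ({x | c < x 1} ∩ {x | x 1 < e})) := by
      ext x; simp [Set.mem_setOf_eq, and_assoc]
    rw [this]
    exact h1.inter (h2.inter (h3.inter h4))
  set S1 : Set E := {x | x 0 = a ∧ x 1 ∈ Set.Icc c e}
  set S2 : Set E := {x | x 0 = b ∧ x 1 ∈ Set.Icc c e}
  set S3 : Set E := {x | x 1 = c ∧ x 0 ∈ Set.Icc a b}
  set S4 : Set E := {x | x 1 = e ∧ x 0 ∈ Set.Icc a b}
  have hfr : frontier Q ⊆ (S1 ∪ S2) ∪ (S3 ∪ S4) := by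
    intro x hx
    have hxQ : x ∈ Q := hQc.frontier_subset hx
    have hxnO : x ∉ {x : E | a < x 0 ∧ x 0 < b ∧ c < x 1 ∧ x 1 < e} := by
      intro hmem
      have : x ∈ interior Q := by
        apply interior_maximal _ hO hmem
        intro y hy
        exact ⟨hy.1.le, hy.2.1.le, hy.2.2.1.le, hy.2.2.2.le⟩
      exact hx.2 this
    obtain ⟨h1, h2, h3, h4⟩ := hxQ
    simp only [Set.mem_setOf_eq, not_and, not_lt] at hxnO
    by_cases e1 : x 0 = a
    · exact Or.inl (Or.inl ⟨e1, h3, h4⟩)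
    by_cases e2 : x 0 = b
    · exact Or.inl (Or.inr ⟨e2, h3, h4⟩)
    have ha' : a < x 0 := lt_of_le_of_ne h1 (Ne.symm e1)
    have hb' : x 0 < b := lt_of_le_of_ne h2 e2
    by_cases e3 : x 1 = c
    · exact Or.inr (Or.inl ⟨e3, h1, h2⟩)
    have hc' : c < x 1 := lt_of_le_of_ne h3 (Ne.symm e3)
    have he' : x 1 ≤ e := h4
    have := hxnO ha' hb' hc'
    exact Or.inr (Or.inr ⟨le_antisymm h4 this, h1, h2⟩)
  calc μH[1] (frontier Q) ≤ μH[1] ((S1 ∪ S2) ∪ (S3 ∪ S4)) := measure_mono hfr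
    _ ≤ μH[1] (S1 ∪ S2) + μH[1] (S3 ∪ S4) := measure_union_le _ _
    _ ≤ (μH[1] S1 + μH[1] S2) + (μH[1] S3 + μH[1] S4) :=
        add_le_add (measure_union_le _ _) (measure_union_le _ _)
    _ ≤ (ENNReal.ofReal (e - c) + ENNReal.ofReal (e - c))
        + (ENNReal.ofReal (b - a) + ENNReal.ofReal (b - a)) := by
        refine add_le_add (add_le_add ?_ ?_) (add_le_add ?_ ?_)
        · exact hmeas_vert_le a c e
        · exact hmeas_vert_le b c e
        · exact hmeas_horiz_le c a b
        · exact hmeas_horiz_le e a b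
    _ = ENNReal.ofReal (2*(b-a) + 2*(e-c)) := by
        rw [← ENNReal.ofReal_add (by linarith) (by linarith),
            ← ENNReal.ofReal_add (by linarith) (by linarith),
            ← ENNReal.ofReal_add (by linarith) (by linarith)]
        ring_nf
  
/-- volume of the box -/
lemma box_volume (a b c e : ℝ) :
    volume {x : E | a ≤ x 0 ∧ x 0 ≤ b ∧ c ≤ x 1 ∧ x 1 ≤ e}
      = ENNReal.ofReal (b - a) * ENNReal.ofReal (e - c) := by
  have hT := EuclideanSpace.volume_preserving_symm_measurableEquiv_toLp (Fin 2)
  set s : Set (Fin 2 → ℝ) := Set.univ.pi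
    (fun i => if i = 0 then Set.Icc a b else Set.Icc c e) with hsdef
  have hsm : MeasurableSet s := by
    apply MeasurableSet.univ_pi
    intro i
    by_cases h : i = 0 <;> simp [h, measurableSet_Icc]
  have hpre : (MeasurableEquiv.toLp 2 (Fin 2 → ℝ)).symm ⁻¹' s
      = {x : E | a ≤ x 0 ∧ x 0 ≤ b ∧ c ≤ x 1 ∧ x 1 ≤ e} := by
    ext x
    simp only [Set.mem_preimage, hsdef, Set.mem_pi, Set.mem_univ, true_implies,
      Set.mem_setOf_eq]
    constructor
    · intro h
      have h0 := h 0
      have h1 := h 1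
      simp only [if_pos rfl] at h0
      norm_num at h1
      exact ⟨h0.1, h0.2, h1.1, h1.2⟩
    · intro h i
      fin_cases i <;> simp [Set.mem_Icc] <;> tauto
  rw [← hpre, hT.measure_preimage hsm.nullMeasurableSet, hsdef, volume_pi_pi,
    Fin.prod_univ_two]
  norm_num [Real.volume_Icc]

/-- Perimeter monotonicity via the 1-Lipschitz nearest point projection. -/
lemma frontier_hmeas_le {K Q : Set E}
    (hK : Convex ℝ K) (hKc : IsCompact K) (hKint : (interior K).Nonempty)
    (hQb : Bornology.IsBounded Q) (hQcl : IsClosed Q) (hsub : K ⊆ Q) :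
    μH[1] (frontier K) ≤ μH[1] (frontier Q) := by
  classical
  have hKne : K.Nonempty := hKint.mono interior_subset
  have hKcl : IsClosed K := hKc.isClosed
  have hcompl : IsComplete K := hKcl.isComplete
  choose f hfK hfmin using exists_norm_eq_iInf_of_complete_convex hKne hcompl hK
  have hinner : ∀ u, ∀ w ∈ K, ⟪u - f u, w - f u⟫ ≤ 0 := fun u =>
    (norm_eq_iInf_iff_real_inner_le_zero hK (hfK u)).1 (hfmin u)
  have hlip : LipschitzWith 1 f := by
    refine LipschitzWith.of_dist_le_mul fun u v => ?_
    rw [dist_eq_norm, dist_eq_norm, NNReal.coe_one, one_mul]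
    have h1 : ⟪u - f u, f v - f u⟫ ≤ 0 := hinner u (f v) (hfK v)
    have h2 : ⟪v - f v, f u - f v⟫ ≤ 0 := hinner v (f u) (hfK u)
    have key : ‖f u - f v‖ ^ 2 ≤ ⟪u - v, f u - f v⟫ := by
      have e : ⟪u - v, f u - f v⟫ - ⟪f u - f v, f u - f v⟫
          = - ⟪u - f u, f v - f u⟫ - ⟪v - f v, f u - f v⟫ := by
        simp only [inner_sub_left, inner_sub_right]; ring
      have e2 : ⟪f u - f v, f u - f v⟫ = ‖f u - f v‖ ^ 2 :=
        real_inner_self_eq_norm_sq (f u - f v)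
      linarith
    have hcs := real_inner_le_norm (u - v) (f u - f v)
    nlinarith [norm_nonneg (f u - f v), norm_nonneg (u - v)]
  have hsubfr : frontier K ⊆ f '' frontier Q := by
    intro y hy
    have hyK : y ∈ K := hKcl.frontier_subset hy
    have hyni : y ∉ interior K := hy.2
    obtain ⟨g, hg⟩ := geometric_hahn_banach_open_point hK.interior isOpen_interior hyni
    set v : E := (InnerProductSpace.toDual ℝ E).symm g with hvdef
    have hgv : ∀ x, g x = ⟪v, x⟫ := fun x => (InnerProductSpace.toDual_symm_apply).symm
    have hvne : v ≠ 0 := by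
      obtain ⟨a, ha⟩ := hKint
      intro h0
      have h1 := hg a ha
      rw [hgv a, hgv y, h0] at h1
      simp at h1
    have hvpos : (0:ℝ) < ‖v‖ := norm_pos_iff.2 hvne
    have hsupp : ∀ w ∈ K, ⟪v, w⟫ ≤ ⟪v, y⟫ := by
      intro w hw
      obtain ⟨a, ha⟩ := hKint
      have seq : ∀ t ∈ Set.Ioo (0:ℝ) 1, ⟪v, t • a + (1-t) • w⟫ ≤ ⟪v, y⟫ := by
        intro t ht
        have hmem : t • a + (1-t) • w ∈ interior K :=
          hK.combo_interior_closure_mem_interior ha (subset_closure hw) ht.1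
            (by linarith [ht.2]) (by ring)
        have := hg _ hmem
        rw [hgv, hgv] at this
        exact this.le
      have hc : Continuous fun t : ℝ => ⟪v, t • a + (1-t) • w⟫ := by
        apply Continuous.inner continuous_const
        fun_prop
      have hT : Filter.Tendsto (fun t : ℝ => ⟪v, t • a + (1-t) • w⟫)
          (nhdsWithin 0 (Set.Ioo 0 1)) (nhds ⟪v, w⟫) := by
        have h0 : ⟪v, (0:ℝ) • a + (1-(0:ℝ)) • w⟫ = ⟪v, w⟫ := by norm_num
        simpa [h0] using (hc.tendsto 0).mono_left nhdsWithin_le_nhds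
      have hne : (nhdsWithin (0:ℝ) (Set.Ioo 0 1)).NeBot := by
        rw [← mem_closure_iff_nhdsWithin_neBot, closure_Ioo one_ne_zero.symm]
        exact ⟨le_refl 0, zero_le_one⟩
      exact le_of_tendsto hT
        (Filter.eventually_iff_exists_mem.2 ⟨Set.Ioo 0 1, self_mem_nhdsWithin, seq⟩)
    set S := {t : ℝ | 0 ≤ t ∧ y + t • v ∈ Q} with hSdef
    have h0S : (0:ℝ) ∈ S := ⟨le_refl 0, by simpa using hsub hyK⟩
    obtain ⟨R, hR⟩ := isBounded_iff_forall_norm_le.1 hQb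
    have hbdd : BddAbove S := by
      refine ⟨(R + ‖y‖)/‖v‖, fun t ht => ?_⟩
      have h1 : ‖y + t • v‖ ≤ R := hR _ ht.2
      have h2 : ‖t • v‖ ≤ ‖y + t • v‖ + ‖y‖ := by
        have h3 := norm_sub_le (y + t • v) y
        simpa using h3
      rw [norm_smul, Real.norm_eq_abs, abs_of_nonneg ht.1] at h2
      rw [le_div_iff₀ hvpos]
      linarith
    have hScl : IsClosed S := by
      have : S = Set.Ici 0 ∩ (fun t : ℝ => y + t • v) ⁻¹' Q := by
        ext t; simp [hSdef, Set.mem_Ici]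
      rw [this]
      exact isClosed_Ici.inter (hQcl.preimage (by fun_prop))
    have hsS : sSup S ∈ S := hScl.csSup_mem ⟨0, h0S⟩ hbdd
    set s := sSup S with hsdef
    set z := y + s • v with hzdef
    have hzQ : z ∈ Q := hsS.2
    have hs0 : 0 ≤ s := hsS.1
    have hzfr : z ∈ frontier Q := by
      refine ⟨subset_closure hzQ, fun hzint => ?_⟩
      obtain ⟨ε, hε, hball⟩ := Metric.isOpen_iff.1 isOpen_interior z hzint
      have hquot : (0:ℝ) < ε / (2*‖v‖) := by positivity
      have hmem : y + (s + ε / (2*‖v‖)) • v ∈ Q := by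
        apply interior_subset
        apply hball
        rw [Metric.mem_ball, dist_eq_norm]
        have he : y + (s + ε/(2*‖v‖)) • v - z = (ε/(2*‖v‖)) • v := by
          rw [hzdef]; module
        rw [he, norm_smul, Real.norm_eq_abs, abs_of_pos hquot]
        rw [div_mul_eq_mul_div, mul_comm, ← div_mul_eq_mul_div]
        calc ‖v‖ / (2*‖v‖) * ε = (1/2) * ε := by
              field_simp
            _ < ε := by linarith
      have hle : s + ε/(2*‖v‖) ≤ s := le_csSup hbdd ⟨by linarith, hmem⟩
      linarith
    refine ⟨z, hzfr, ?_⟩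
    have : Nonempty K := hKne.to_subtype
    have hmin : ‖z - f z‖ ≤ ‖z - y‖ := by
      rw [hfmin z]
      exact ciInf_le ⟨0, Set.forall_mem_range.2 fun _ => norm_nonneg _⟩ (⟨y, hyK⟩ : K)
    have hq : ‖z - y‖^2 + ‖y - f z‖^2 ≤ ‖z - f z‖^2 := by
      have hvy : ⟪v, y - f z⟫ ≥ 0 := by
        have := hsupp (f z) (hfK z)
        rw [inner_sub_right]
        linarith
      have hzy : z - y = s • v := by rw [hzdef]; abel
      have hin : 0 ≤ ⟪z - y, y - f z⟫ := by
        rw [hzy, real_inner_smul_left]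
        exact mul_nonneg hs0 hvy
      have expand : ‖z - f z‖^2 = ‖z - y‖^2 + 2*⟪z - y, y - f z⟫ + ‖y - f z‖^2 := by
        have hsplit : z - f z = (z - y) + (y - f z) := by abel
        rw [hsplit, norm_add_sq_real]
      linarith
    have hyz : ‖y - f z‖ = 0 := by
      nlinarith [norm_nonneg (y - f z), norm_nonneg (z - y), norm_nonneg (z - f z)]
    have : y - f z = 0 := norm_eq_zero.1 hyz
    have : f z = y := by
      have := sub_eq_zero.1 this
      exact this.symm
    exact this
  have himg := hlip.hausdorffMeasure_image_le zero_le_one (frontier Q)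
  have himg' : μH[1] (f '' frontier Q) ≤ μH[1] (frontier Q) := by simpa using himg
  exact le_trans (measure_mono hsubfr) himg'

lemma numeric (p d r₁ r₂ M : ℝ) (hp0 : 0 < p) (hp1 : p < 1) (hd : 0 ≤ d)
    (hdM : d < r₁/M) (hM : 1 < M) (hr₂ : 0 < r₂) (hr₁₂ : r₂ ≤ r₁) :
    2 ^ (1 - p) * (4 * r₂ * (r₁/M + d)) ^ (1 - p) * (2*r₁/M + 2*d + 8*r₂) ^ p
      ≤ (2 ^ (1-p) * 8 * 2 ^ (p/2)) / M ^ (1 - p) * (r₁ * r₂) ^ (1 - p)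
        * (r₁^2 + r₂^2) ^ (p/2) := by
  have hr₁ : 0 < r₁ := lt_of_lt_of_le hr₂ hr₁₂
  have hM0 : 0 < M := lt_trans zero_lt_one hM
  have hrm : 0 < r₁ / M := lt_of_le_of_lt hd hdM
  have h1p : 0 < 1 - p := by linarith
  -- step 1
  have hbase1 : 4 * r₂ * (r₁/M + d) ≤ 8 * (r₁ * r₂) / M := by
    have : r₁/M + d ≤ 2 * (r₁/M) := by linarith
    calc 4 * r₂ * (r₁/M + d) ≤ 4 * r₂ * (2 * (r₁/M)) := by
          apply mul_le_mul_of_nonneg_left this (by positivity)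
      _ = 8 * (r₁ * r₂) / M := by ring
  have hbase2 : 2*r₁/M + 2*d + 8*r₂ ≤ 8 * (r₁ + r₂) := by
    have h1 : r₁ / M ≤ r₁ := div_le_self hr₁.le hM.le
    have h2 : d ≤ r₁ := le_trans hdM.le h1
    have : 2*r₁/M = 2*(r₁/M) := by ring
    rw [this]
    linarith
  have step1 : 2 ^ (1 - p) * (4 * r₂ * (r₁/M + d)) ^ (1 - p) * (2*r₁/M + 2*d + 8*r₂) ^ p
      ≤ 2 ^ (1 - p) * (8 * (r₁ * r₂) / M) ^ (1 - p) * (8 * (r₁ + r₂)) ^ p := by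
    apply mul_le_mul
    · apply mul_le_mul_of_nonneg_left _ (by positivity)
      exact Real.rpow_le_rpow (by positivity) hbase1 h1p.le
    · exact Real.rpow_le_rpow (by positivity) hbase2 hp0.le
    · positivity
    · positivity
  -- step 2: (r₁+r₂)^p ≤ 2^(p/2) * (r₁²+r₂²)^(p/2)
  have htri : (r₁ + r₂) ^ p ≤ 2 ^ (p/2) * (r₁^2 + r₂^2) ^ (p/2) := by
    have h1 : (r₁ + r₂) ^ p = ((r₁ + r₂)^(2:ℕ)) ^ (p/2) := by
      rw [← Real.rpow_natCast (r₁ + r₂) 2, ← Real.rpow_mul (by positivity)]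
      congr 1
      ring
    have h2 : ((r₁ + r₂)^(2:ℕ) : ℝ) ≤ 2 * (r₁^2 + r₂^2) := by nlinarith
    rw [h1, ← Real.mul_rpow (by norm_num) (by positivity)]
    exact Real.rpow_le_rpow (by positivity) h2 (by positivity)
  have step2 : 2 ^ (1 - p) * (8 * (r₁ * r₂) / M) ^ (1 - p) * (8 * (r₁ + r₂)) ^ p
      ≤ 2 ^ (1 - p) * (8 ^ (1-p) * ((r₁ * r₂) ^ (1-p) / M ^ (1-p)))
        * (8 ^ p * (2 ^ (p/2) * (r₁^2 + r₂^2) ^ (p/2))) := by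
    have e1 : (8 * (r₁ * r₂) / M) ^ (1 - p)
        = 8 ^ (1-p) * ((r₁ * r₂) ^ (1-p) / M ^ (1-p)) := by
      rw [Real.div_rpow (by positivity) hM0.le,
        Real.mul_rpow (by norm_num) (by positivity)]
      ring
    have e2 : (8 * (r₁ + r₂)) ^ p = 8 ^ p * (r₁ + r₂) ^ p := by
      rw [Real.mul_rpow (by norm_num) (by positivity)]
    rw [e1, e2]
    apply mul_le_mul_of_nonneg_left _ (by positivity)
    exact mul_le_mul_of_nonneg_left htri (by positivity)
  have e888 : (8:ℝ) ^ (1-p) * 8 ^ p = 8 := by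
    rw [← Real.rpow_add (by norm_num)]
    norm_num
  calc 2 ^ (1 - p) * (4 * r₂ * (r₁/M + d)) ^ (1 - p) * (2*r₁/M + 2*d + 8*r₂) ^ p
      ≤ 2 ^ (1 - p) * (8 * (r₁ * r₂) / M) ^ (1 - p) * (8 * (r₁ + r₂)) ^ p := step1
    _ ≤ 2 ^ (1 - p) * (8 ^ (1-p) * ((r₁ * r₂) ^ (1-p) / M ^ (1-p)))
        * (8 ^ p * (2 ^ (p/2) * (r₁^2 + r₂^2) ^ (p/2))) := step2
    _ = (8 ^ (1-p) * 8 ^ p) * (2 ^ (1-p) * 2 ^ (p/2) / M ^ (1-p)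
          * (r₁ * r₂) ^ (1-p) * (r₁^2 + r₂^2) ^ (p/2)) := by ring
    _ = (2 ^ (1-p) * 8 * 2 ^ (p/2)) / M ^ (1 - p) * (r₁ * r₂) ^ (1 - p)
        * (r₁^2 + r₂^2) ^ (p/2) := by rw [e888]; ring


lemma norm_le_abs (x : E) : ‖x‖ ≤ |x 0| + |x 1| := by
  rw [EuclideanSpace.norm_eq, Fin.sum_univ_two]
  have h1 : ‖x 0‖ ^ 2 + ‖x 1‖ ^ 2 ≤ (|x 0| + |x 1|) ^ 2 := by
    rw [Real.norm_eq_abs, Real.norm_eq_abs]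
    nlinarith [abs_nonneg (x 0), abs_nonneg (x 1)]
  calc Real.sqrt (‖x 0‖ ^ 2 + ‖x 1‖ ^ 2) ≤ Real.sqrt ((|x 0| + |x 1|) ^ 2) :=
        Real.sqrt_le_sqrt h1
    _ = |x 0| + |x 1| := Real.sqrt_sq (by positivity)

lemma box_bounded (a b c e : ℝ) :
    Bornology.IsBounded {x : E | a ≤ x 0 ∧ x 0 ≤ b ∧ c ≤ x 1 ∧ x 1 ≤ e} := by
  rw [isBounded_iff_forall_norm_le]
  refine ⟨(|a| + |b|) + (|c| + |e|), fun x hx => ?_⟩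
  obtain ⟨h1, h2, h3, h4⟩ := hx
  have h0 : |x 0| ≤ |a| + |b| :=
    abs_le.2 ⟨by linarith [neg_abs_le a, abs_nonneg b], by linarith [le_abs_self b, abs_nonneg a]⟩
  have h1' : |x 1| ≤ |c| + |e| :=
    abs_le.2 ⟨by linarith [neg_abs_le c, abs_nonneg e], by linarith [le_abs_self e, abs_nonneg c]⟩
  linarith [norm_le_abs x]

lemma box_closed (a b c e : ℝ) :
    IsClosed {x : E | a ≤ x 0 ∧ x 0 ≤ b ∧ c ≤ x 1 ∧ x 1 ≤ e} := by
  have h1 : IsClosed {x : E | a ≤ x 0} := isClosed_le continuous_const (cont_eval 0)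
  have h2 : IsClosed {x : E | x 0 ≤ b} := isClosed_le (cont_eval 0) continuous_const
  have h3 : IsClosed {x : E | c ≤ x 1} := isClosed_le continuous_const (cont_eval 1)
  have h4 : IsClosed {x : E | x 1 ≤ e} := isClosed_le (cont_eval 1) continuous_const
  have heq : {x : E | a ≤ x 0 ∧ x 0 ≤ b ∧ c ≤ x 1 ∧ x 1 ≤ e}
      = {x : E | a ≤ x 0} ∩ ({x | x 0 ≤ b} ∩ ({x | c ≤ x 1} ∩ {x | x 1 ≤ e})) := by
    ext x; simp [Set.mem_setOf_eq, and_assoc]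
  rw [heq]
  exact h1.inter (h2.inter (h3.inter h4))

end Stmt12Aux

open Stmt12Aux in
/-- `L_p` surface area bound for a convex body contained in the thin box
`Q = [-d, r₁/M] × [a₂-2r₂, a₂+2r₂]`. The surface area measure `μ = S(K̃,·)` is
characterized by `∫ h dμ = 2 Area(K̃)` and `μ(S¹) = H¹(∂K̃)`. -/
theorem stmt_12 (p : ℝ) (hp : p ∈ Set.Ioo (0:ℝ) 1) :
    ∃ C : ℝ, 0 < C ∧
    ∀ (d r₁ r₂ M a₂ : ℝ), 0 ≤ d → d < r₁ / M → 1 < M → 0 < r₂ → r₂ ≤ r₁ →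
    ∀ (Kt : Set (EuclideanSpace ℝ (Fin 2))),
      Convex ℝ Kt → IsCompact Kt → (interior Kt).Nonempty →
      (0 : EuclideanSpace ℝ (Fin 2)) ∈ Kt →
      Kt ⊆ {x | -d ≤ x 0 ∧ x 0 ≤ r₁ / M ∧ a₂ - 2*r₂ ≤ x 1 ∧ x 1 ≤ a₂ + 2*r₂} →
    ∀ (μ : Measure (Metric.sphere (0 : EuclideanSpace ℝ (Fin 2)) 1)), IsFiniteMeasure μ →
      (∫ u, suppFn Kt u ∂μ = 2 * (volume Kt).toReal) →
      ((μ Set.univ).toReal = (μH[1] (frontier Kt)).toReal) →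
      (∫ u, (suppFn Kt u) ^ (1 - p) ∂μ
          ≤ 2 ^ (1 - p) * (4 * r₂ * (r₁/M + d)) ^ (1 - p) * (2*r₁/M + 2*d + 8*r₂) ^ p) ∧
      (2 ^ (1 - p) * (4 * r₂ * (r₁/M + d)) ^ (1 - p) * (2*r₁/M + 2*d + 8*r₂) ^ p
          ≤ C / M ^ (1 - p) * (r₁ * r₂) ^ (1 - p) * (r₁^2 + r₂^2) ^ (p/2)) := by
  obtain ⟨hp0, hp1⟩ := hp
  have h1p : (0:ℝ) < 1 - p := by linarith
  refine ⟨2 ^ (1-p) * 8 * 2 ^ (p/2), by positivity, ?_⟩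
  intro d r₁ r₂ M a₂ hd hdM hM hr₂ hr₁₂ Kt hconv hcomp hint h0K hsubQ μ hfin hiμ hμuniv
  have hr₁ : 0 < r₁ := lt_of_lt_of_le hr₂ hr₁₂
  have hM0 : 0 < M := lt_trans zero_lt_one hM
  have hrm : 0 < r₁ / M := lt_of_le_of_lt hd hdM
  refine ⟨?_, numeric p d r₁ r₂ M hp0 hp1 hd hdM hM hr₂ hr₁₂⟩
  -- bound on K
  obtain ⟨R, hR⟩ := isBounded_iff_forall_norm_le.1 hcomp.isBounded
  have hR0 : 0 ≤ R := by
    have := hR 0 h0K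
    simpa using this
  -- support function basics
  have himg_ne : ∀ u : E, ((fun x => ⟪u, x⟫) '' Kt).Nonempty :=
    fun u => ⟨_, Set.mem_image_of_mem _ h0K⟩
  have hbddA : ∀ u : E, BddAbove ((fun x => ⟪u, x⟫) '' Kt) := by
    intro u
    refine ⟨‖u‖ * R, ?_⟩
    rintro _ ⟨x, hx, rfl⟩
    calc ⟪u, x⟫ ≤ ‖u‖ * ‖x‖ := real_inner_le_norm u x
      _ ≤ ‖u‖ * R := mul_le_mul_of_nonneg_left (hR x hx) (norm_nonneg u)
  have hnonneg : ∀ u : E, 0 ≤ suppFn Kt u := fun u =>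
    le_csSup (hbddA u) ⟨0, h0K, inner_zero_right u⟩
  have hle : ∀ x ∈ Kt, ∀ u : E, ⟪u, x⟫ ≤ suppFn Kt u := fun x hx u =>
    le_csSup (hbddA u) ⟨x, hx, rfl⟩
  have hub : ∀ u : Metric.sphere (0:E) 1, suppFn Kt ↑u ≤ R := by
    intro u
    apply csSup_le (himg_ne ↑u)
    rintro _ ⟨x, hx, rfl⟩
    have hu1 : ‖(u:E)‖ = 1 := by
      have := u.2
      rwa [mem_sphere_zero_iff_norm] at this
    calc ⟪(u:E), x⟫ ≤ ‖(u:E)‖ * ‖x‖ := real_inner_le_norm _ _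
      _ = ‖x‖ := by rw [hu1, one_mul]
      _ ≤ R := hR x hx
  -- Lipschitz of suppFn
  have hlipf : ∀ u v : E, suppFn Kt u ≤ suppFn Kt v + R * ‖u - v‖ := by
    intro u v
    apply csSup_le (himg_ne u)
    rintro _ ⟨x, hx, rfl⟩
    have h1 : ⟪u, x⟫ = ⟪v, x⟫ + ⟪u - v, x⟫ := by rw [inner_sub_left]; ring
    have h2 : ⟪u - v, x⟫ ≤ ‖u - v‖ * ‖x‖ := real_inner_le_norm _ _
    have h3 : ‖u - v‖ * ‖x‖ ≤ ‖u - v‖ * R := mul_le_mul_of_nonneg_left (hR x hx) (norm_nonneg _)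
    have h4 := hle x hx v
    show ⟪u, x⟫ ≤ suppFn Kt v + R * ‖u - v‖
    rw [h1]
    nlinarith
  have hlipf' : LipschitzWith (Real.toNNReal R) (suppFn Kt) := by
    apply LipschitzWith.of_dist_le_mul
    intro u v
    rw [Real.dist_eq, Real.coe_toNNReal R hR0, dist_eq_norm]
    rw [abs_sub_le_iff]
    constructor
    · have := hlipf u v; linarith
    · have h := hlipf v u
      rw [norm_sub_rev] at h
      linarith
  have hcontS : Continuous fun u : Metric.sphere (0:E) 1 => suppFn Kt ↑u :=
    hlipf'.continuous.comp continuous_subtype_val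
  -- ℝ≥0∞ version
  set gf : Metric.sphere (0:E) 1 → ℝ≥0∞ := fun u => ENNReal.ofReal (suppFn Kt ↑u) with hgfdef
  have hgmeas : Measurable gf := ENNReal.measurable_ofReal.comp hcontS.measurable
  have hgle : ∀ u, gf u ≤ ENNReal.ofReal R := fun u => ENNReal.ofReal_le_ofReal (hub u)
  have hgint : ∫⁻ u, gf u ∂μ ≠ ⊤ := by
    have hb : ∫⁻ u, gf u ∂μ ≤ ∫⁻ _, ENNReal.ofReal R ∂μ := lintegral_mono hgle
    rw [lintegral_const] at hb
    exact ne_top_of_le_ne_top (ENNReal.mul_ne_top ENNReal.ofReal_ne_top (measure_ne_top μ _)) hb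
  -- Hölder
  have hpq : Real.HolderConjugate (1/(1-p)) (1/p) := by
    constructor
    · rw [one_div, one_div, inv_inv, inv_inv, inv_one]; ring
    · exact one_div_pos.2 h1p
    · exact one_div_pos.2 hp0
  have key : ∫⁻ u, gf u ^ (1-p) ∂μ ≤ (∫⁻ u, gf u ∂μ) ^ (1-p) * (μ Set.univ) ^ p := by
    have hf : AEMeasurable (fun u => gf u ^ (1-p)) μ :=
      (ENNReal.continuous_rpow_const.measurable.comp hgmeas).aemeasurable
    have h := ENNReal.lintegral_mul_le_Lp_mul_Lq μ hpq hf
      (aemeasurable_const (b := (1:ℝ≥0∞)))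
    have e1 : ∀ u : Metric.sphere (0:E) 1, (gf u ^ (1-p)) ^ (1/(1-p)) = gf u := by
      intro u
      rw [← ENNReal.rpow_mul, mul_one_div_cancel (ne_of_gt h1p), ENNReal.rpow_one]
    simp only [Pi.mul_apply, mul_one, ENNReal.one_rpow, lintegral_one, one_div_one_div, e1] at h
    exact h
  have hfinRHS : (∫⁻ u, gf u ∂μ) ^ (1-p) * (μ Set.univ) ^ p ≠ ⊤ :=
    ENNReal.mul_ne_top (ENNReal.rpow_ne_top_of_nonneg h1p.le hgint)
      (ENNReal.rpow_ne_top_of_nonneg hp0.le (measure_ne_top μ _))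
  -- real conversions
  have hint1 : ∫ u, suppFn Kt ↑u ∂μ = (∫⁻ u, gf u ∂μ).toReal := by
    rw [integral_eq_lintegral_of_nonneg_ae
      (Filter.Eventually.of_forall fun u : Metric.sphere (0:E) 1 => hnonneg ↑u)
      hcontS.aestronglyMeasurable]
  have hint2 : ∫ u, suppFn Kt ↑u ^ (1 - p) ∂μ = (∫⁻ u, gf u ^ (1-p) ∂μ).toReal := by
    rw [integral_eq_lintegral_of_nonneg_ae
      (Filter.Eventually.of_forall
        fun u : Metric.sphere (0:E) 1 => Real.rpow_nonneg (hnonneg ↑u) (1-p))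
      ((hcontS.rpow_const (fun x => Or.inr h1p.le)).aestronglyMeasurable)]
    congr 1
    apply lintegral_congr
    intro u
    exact (ENNReal.ofReal_rpow_of_nonneg (hnonneg ↑u) h1p.le).symm
  -- area bound
  have hA : (∫⁻ u, gf u ∂μ).toReal ≤ 2 * (4 * r₂ * (r₁/M + d)) := by
    have hAe : (∫⁻ u, gf u ∂μ).toReal = 2 * (volume Kt).toReal := by rw [← hint1, hiμ]
    rw [hAe]
    have hQvol := box_volume (-d) (r₁/M) (a₂-2*r₂) (a₂+2*r₂)
    have hvol : volume Kt ≤ volume {x : E | -d ≤ x 0 ∧ x 0 ≤ r₁/M ∧ a₂ - 2*r₂ ≤ x 1 ∧ x 1 ≤ a₂ + 2*r₂} := by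
      apply measure_mono
      exact hsubQ
    have hne : volume {x : E | -d ≤ x 0 ∧ x 0 ≤ r₁/M ∧ a₂ - 2*r₂ ≤ x 1 ∧ x 1 ≤ a₂ + 2*r₂} ≠ ⊤ := by
      rw [hQvol]
      exact ENNReal.mul_ne_top ENNReal.ofReal_ne_top ENNReal.ofReal_ne_top
    have hmono := ENNReal.toReal_mono hne hvol
    rw [hQvol, ENNReal.toReal_mul, ENNReal.toReal_ofReal (by linarith),
      ENNReal.toReal_ofReal (by linarith)] at hmono
    have : (volume Kt).toReal ≤ (4 * r₂ * (r₁/M + d)) := by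
      calc (volume Kt).toReal ≤ (r₁/M - -d) * (a₂+2*r₂ - (a₂-2*r₂)) := hmono
        _ = 4 * r₂ * (r₁/M + d) := by ring
    linarith
  -- perimeter bound
  have hB : (μ Set.univ).toReal ≤ 2*r₁/M + 2*d + 8*r₂ := by
    rw [hμuniv]
    have hfr := frontier_hmeas_le hconv hcomp hint
      (box_bounded (-d) (r₁/M) (a₂-2*r₂) (a₂+2*r₂))
      (box_closed (-d) (r₁/M) (a₂-2*r₂) (a₂+2*r₂)) hsubQ
    have hbox := box_frontier_le (-d) (r₁/M) (a₂-2*r₂) (a₂+2*r₂) (by linarith) (by linarith)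
    have hcomb := le_trans hfr hbox
    have h2 := ENNReal.toReal_mono ENNReal.ofReal_ne_top hcomb
    rw [ENNReal.toReal_ofReal (by linarith)] at h2
    calc (μH[1] (frontier Kt)).toReal
        ≤ 2*(r₁/M - -d) + 2*(a₂+2*r₂ - (a₂-2*r₂)) := h2
      _ = 2*r₁/M + 2*d + 8*r₂ := by ring
  -- combine
  calc ∫ u, suppFn Kt ↑u ^ (1 - p) ∂μ
      = (∫⁻ u, gf u ^ (1-p) ∂μ).toReal := hint2
    _ ≤ ((∫⁻ u, gf u ∂μ) ^ (1-p) * (μ Set.univ) ^ p).toReal :=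
        ENNReal.toReal_mono hfinRHS key
    _ = (∫⁻ u, gf u ∂μ).toReal ^ (1-p) * (μ Set.univ).toReal ^ p := by
        rw [ENNReal.toReal_mul, ← ENNReal.toReal_rpow, ← ENNReal.toReal_rpow]
    _ ≤ (2 * (4 * r₂ * (r₁/M + d))) ^ (1-p) * (2*r₁/M + 2*d + 8*r₂) ^ p := by
        apply mul_le_mul
        · exact Real.rpow_le_rpow ENNReal.toReal_nonneg hA h1p.le
        · exact Real.rpow_le_rpow ENNReal.toReal_nonneg hB hp0.le
        · exact Real.rpow_nonneg ENNReal.toReal_nonneg _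
        · exact Real.rpow_nonneg (by positivity) _
    _ = 2 ^ (1-p) * (4 * r₂ * (r₁/M + d)) ^ (1-p) * (2*r₁/M + 2*d + 8*r₂) ^ p := by
        rw [Real.mul_rpow (by norm_num) (by positivity)]
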